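/- Gauss (LDU from the bottom-right) decomposition via quasi-determinants: let A be an N×N matrix over a ring such that the quasi-determinants ℍ_k = |A^{k,…,N}_{k,…,N}|_{kk} exist and are invertible for all k. Then A = E · H · F where H = diag(ℍ₁,…,ℍ_N), E is upper unitriangular with E_{ij} = |A^{i,j+1,…,N}_{j,j+1,…,N}|_{ij} · ℍ_j⁻¹ for i < j, and F is lower unitriangular with F_{ji} = ℍ_j⁻¹ · |A^{j,j+1,…,N}_{i,j+1,…,N}|_{ji} for i < j. -/

import Mathlib

open Matrix

variable {R : Type*} [Ring R] {n : ℕ}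

/-- The trailing submatrix `A^{k+1,…,N}_{k+1,…,N}` (rows and columns `> k`). -/
def trailing (A : Matrix (Fin n) (Fin n) R) (k : Fin n) :
    Matrix {x : Fin n // k < x} {x : Fin n // k < x} R :=
  Matrix.of fun a b => A a b

/-- The quasi-determinant `ℍ_k = |A^{k,…,N}_{k,…,N}|_{kk}`. -/
noncomputable def gaussH (A : Matrix (Fin n) (Fin n) R) (k : Fin n) : R :=
  A k k - ∑ c : {x : Fin n // k < x}, ∑ r : {x : Fin n // k < x},
    A k c * Ring.inverse (trailing A k) c r * A r k

/-- The entry `𝔼_{ij} = |A^{i,j+1,…,N}_{j,j+1,…,N}|_{ij} · ℍ_j⁻¹` (for `i < j`). -/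
noncomputable def gaussE (A : Matrix (Fin n) (Fin n) R) (i j : Fin n) : R :=
  (A i j - ∑ c : {x : Fin n // j < x}, ∑ r : {x : Fin n // j < x},
      A i c * Ring.inverse (trailing A j) c r * A r j) *
    Ring.inverse (gaussH A j)

/-- The entry `𝔽_{ji} = ℍ_j⁻¹ · |A^{j,j+1,…,N}_{i,j+1,…,N}|_{ji}` (for `i < j`). -/
noncomputable def gaussF (A : Matrix (Fin n) (Fin n) R) (j i : Fin n) : R :=
  Ring.inverse (gaussH A j) *
    (A j i - ∑ c : {x : Fin n // j < x}, ∑ r : {x : Fin n // j < x},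
      A j c * Ring.inverse (trailing A j) c r * A r i)

section A1
lemma ringInverse_map {S T : Type*} [Ring S] [Ring T] (f : S ≃+* T) (x : S) :
    Ring.inverse (f x) = f (Ring.inverse x) := by
  by_cases h : IsUnit x
  · obtain ⟨u, rfl⟩ := h
    have h1 : f ↑u = ((Units.map (f : S →* T)) u : T) := rfl
    rw [h1, Ring.inverse_unit, Ring.inverse_unit, ← map_inv (Units.map (f : S →* T)) u]
    rfl
  · have h2 : ¬ IsUnit (f x) := fun hu => h (by simpa using hu.map f.symm)
    rw [Ring.inverse_non_unit _ h, Ring.inverse_non_unit _ h2, map_zero]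

variable {R : Type*} [Ring R]

def reindexRE {p q : Type*} [Fintype p] [Fintype q] [DecidableEq p] [DecidableEq q]
    (e : p ≃ q) : Matrix p p R ≃+* Matrix q q R :=
  { Matrix.reindex e e with
    map_mul' := fun M N => (Matrix.submatrix_mul_equiv M N e.symm e.symm e.symm).symm
    map_add' := fun _ _ => rfl }

lemma ringInverse_reindex {p q : Type*} [Fintype p] [Fintype q] [DecidableEq p] [DecidableEq q]
    (e : p ≃ q) (M : Matrix p p R) :
    Ring.inverse (Matrix.reindex e e M) = Matrix.reindex e e (Ring.inverse M) :=
  ringInverse_map (reindexRE e) M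

def oneE : Matrix Unit Unit R ≃+* R :=
  { toFun := fun M => M () ()
    invFun := fun x => Matrix.of fun _ _ => x
    left_inv := fun M => by ext i j; rfl
    right_inv := fun x => rfl
    map_mul' := fun M N => by simp [Matrix.mul_apply]
    map_add' := fun _ _ => rfl }

lemma isUnit_oneByOne (M : Matrix Unit Unit R) : IsUnit M ↔ IsUnit (M () ()) := by
  constructor
  · exact fun h => h.map (oneE (R := R))
  · intro h
    have h2 : M = (oneE (R := R)).symm (M () ()) := by ext i j; rfl
    rw [h2]
    exact h.map (oneE (R := R)).symm

lemma entry_ringInverse (M : Matrix Unit Unit R) :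
    Ring.inverse M () () = Ring.inverse (M () ()) :=
  (ringInverse_map (oneE (R := R)) M).symm

lemma unit_mul_apply (X Y : Matrix Unit Unit R) : (X * Y) () () = X () () * Y () () := by
  simp [Matrix.mul_apply]

lemma ringInverse_fromBlocks {p q : Type*} [Fintype p] [DecidableEq p] [Fintype q] [DecidableEq q]
    (a : Matrix p p R) (b : Matrix p q R) (c : Matrix q p R)
    (D : Matrix q q R) (hD : IsUnit D) (hS : IsUnit (a - b * Ring.inverse D * c)) :
    Ring.inverse (Matrix.fromBlocks a b c D) =
      Matrix.fromBlocks (Ring.inverse (a - b * Ring.inverse D * c))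
        (-(Ring.inverse (a - b * Ring.inverse D * c) * b * Ring.inverse D))
        (-(Ring.inverse D * c * Ring.inverse (a - b * Ring.inverse D * c)))
        (Ring.inverse D + Ring.inverse D * c * Ring.inverse (a - b * Ring.inverse D * c) * b *
          Ring.inverse D) := by
  set iD := Ring.inverse D with hiD
  set h' := Ring.inverse (a - b * iD * c) with hh'
  have hd1 : D * iD = 1 := Ring.mul_inverse_cancel _ hD
  have hd2 : iD * D = 1 := Ring.inverse_mul_cancel _ hD
  have hc1 : (a - b * iD * c) * h' = 1 := Ring.mul_inverse_cancel _ hS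
  have hc2 : h' * (a - b * iD * c) = 1 := Ring.inverse_mul_cancel _ hS
  rw [Matrix.sub_mul] at hc1
  rw [Matrix.mul_sub] at hc2
  simp only [← Matrix.mul_assoc] at hc2
  have ha1 : a * h' = 1 + b * iD * c * h' := eq_add_of_sub_eq hc1
  have ha2 : h' * a = 1 + h' * b * iD * c := eq_add_of_sub_eq hc2
  set cand := Matrix.fromBlocks h' (-(h' * b * iD)) (-(iD * c * h')) (iD + iD * c * h' * b * iD)
    with hcand
  have h1 : Matrix.fromBlocks a b c D * cand = 1 := by
    rw [hcand, Matrix.fromBlocks_multiply, ← Matrix.fromBlocks_one, Matrix.fromBlocks_inj]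
    refine ⟨?_, ?_, ?_, ?_⟩
    · simp only [Matrix.mul_neg, Matrix.mul_add, ← Matrix.mul_assoc]
      rw [ha1]; abel
    · simp only [Matrix.mul_neg, Matrix.mul_add, ← Matrix.mul_assoc]
      rw [ha1]
      simp only [Matrix.add_mul, Matrix.one_mul]
      abel
    · simp only [Matrix.mul_neg, Matrix.mul_add, ← Matrix.mul_assoc]
      rw [hd1]
      simp only [Matrix.one_mul]
      abel
    · simp only [Matrix.mul_neg, Matrix.mul_add, ← Matrix.mul_assoc]
      rw [hd1]
      simp only [Matrix.one_mul]
      abel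
  have h2 : cand * Matrix.fromBlocks a b c D = 1 := by
    rw [hcand, Matrix.fromBlocks_multiply, ← Matrix.fromBlocks_one, Matrix.fromBlocks_inj]
    refine ⟨?_, ?_, ?_, ?_⟩
    · simp only [Matrix.neg_mul, Matrix.add_mul, ← Matrix.mul_assoc]
      rw [ha2]; abel
    · simp only [Matrix.neg_mul, Matrix.add_mul, ← Matrix.mul_assoc]
      rw [Matrix.mul_assoc (h' * b) iD D, hd2, Matrix.mul_one]
      abel
    · simp only [Matrix.neg_mul, Matrix.add_mul, ← Matrix.mul_assoc]
      rw [Matrix.mul_assoc (iD * c) h' a, ha2]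
      simp only [Matrix.mul_add, Matrix.mul_one, ← Matrix.mul_assoc]
      abel
    · simp only [Matrix.neg_mul, Matrix.add_mul, ← Matrix.mul_assoc]
      rw [Matrix.mul_assoc (iD * c * h' * b) iD D, hd2]
      simp only [Matrix.mul_one]
      abel
  exact Ring.inverse_unit ⟨_, cand, h1, h2⟩

lemma block_quasi {q : Type*} [Fintype q] [DecidableEq q]
    (u₀ : Matrix Unit Unit R) (u₁ : Matrix Unit q R) (w₀ : Matrix Unit Unit R)
    (w₁ : Matrix q Unit R) (a : Matrix Unit Unit R) (b : Matrix Unit q R) (c : Matrix q Unit R)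
    (D : Matrix q q R) (hD : IsUnit D) (hS : IsUnit (a - b * Ring.inverse D * c)) :
    Matrix.fromCols u₀ u₁ * Ring.inverse (Matrix.fromBlocks a b c D) * Matrix.fromRows w₀ w₁ =
      u₁ * Ring.inverse D * w₁ +
        (u₀ - u₁ * Ring.inverse D * c) * Ring.inverse (a - b * Ring.inverse D * c) *
          (w₀ - b * Ring.inverse D * w₁) := by
  rw [ringInverse_fromBlocks a b c D hD hS, Matrix.fromCols_mul_fromBlocks,
    Matrix.fromCols_mul_fromRows]
  set iD := Ring.inverse D
  set h' := Ring.inverse (a - b * iD * c)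
  simp only [Matrix.mul_neg, Matrix.neg_mul, Matrix.mul_add, Matrix.add_mul, Matrix.mul_sub,
    Matrix.sub_mul, ← Matrix.mul_assoc]
  abel
end A1

section Aux2
variable {R : Type*} [Ring R] {n : ℕ}

/-- The generalized quasi-determinant entry at level `k`. -/
noncomputable def gg (A : Matrix (Fin n) (Fin n) R) (k : Fin n) (i j : Fin n) : R :=
  A i j - ∑ c : {x : Fin n // k < x}, ∑ r : {x : Fin n // k < x},
    A i c * Ring.inverse (trailing A k) c r * A r j

lemma gaussH_eq_gg (A : Matrix (Fin n) (Fin n) R) (k : Fin n) : gaussH A k = gg A k k k := rfl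

lemma sum_eq_matrix {S : Type*} [Fintype S] (u : S → R) (N : Matrix S S R) (w : S → R) :
    ∑ c, ∑ r, u c * N c r * w r =
      ((Matrix.of fun (_ : Unit) c => u c) * N * (Matrix.of fun r (_ : Unit) => w r)) () () := by
  rw [Finset.sum_comm]
  simp only [Matrix.mul_apply, Matrix.of_apply, Finset.sum_mul]

lemma gg_rec (A : Matrix (Fin n) (Fin n) R) (htr : ∀ k, IsUnit (trailing A k))
    (k k' : Fin n) (hk' : (k' : ℕ) = (k : ℕ) + 1) (hH' : IsUnit (gaussH A k')) (i j : Fin n) :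
    gg A k i j = gg A k' i j - gg A k' i k' * Ring.inverse (gaussH A k') * gg A k' k' j := by
  have hkk' : k < k' := by rw [Fin.lt_def]; omega
  let e : (Unit ⊕ {x : Fin n // k' < x}) ≃ {x : Fin n // k < x} :=
  { toFun := Sum.elim (fun _ => ⟨k', hkk'⟩) (fun x => ⟨x.1, lt_trans hkk' x.2⟩)
    invFun := fun s => if h : k' < s.1 then Sum.inr ⟨s.1, h⟩ else Sum.inl ()
    left_inv := by
      rintro (⟨⟩ | ⟨x, hx⟩)
      · simp
      · simp [hx]
    right_inv := by
      rintro ⟨x, hx⟩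
      by_cases h : k' < x
      · simp [h]
      · have hx' : x = k' := by
          apply Fin.ext
          rw [Fin.lt_def] at hx h
          omega
        subst hx'
        simp [h] }
  set iD := Ring.inverse (trailing A k') with hiDdef
  set a0 : Matrix Unit Unit R := Matrix.of fun _ _ => A k' k' with ha0
  set b0 : Matrix Unit {x : Fin n // k' < x} R := Matrix.of fun _ s => A k' ↑s with hb0
  set c0 : Matrix {x : Fin n // k' < x} Unit R := Matrix.of fun s _ => A ↑s k' with hc0
  set M0 := Matrix.fromBlocks a0 b0 c0 (trailing A k') with hM0
  have hSch : (a0 - b0 * iD * c0) () () = gaussH A k' := by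
    rw [Matrix.sub_apply,
      ← sum_eq_matrix (fun c : {x : Fin n // k' < x} => A k' ↑c) iD
        (fun r : {x : Fin n // k' < x} => A ↑r k')]
    rfl
  have hS : IsUnit (a0 - b0 * iD * c0) := (isUnit_oneByOne _).mpr (hSch ▸ hH')
  have hM : trailing A k = (Matrix.reindex e e) M0 := by
    ext s t
    rw [Matrix.reindex_apply, Matrix.submatrix_apply]
    obtain ⟨s, hs⟩ := s
    obtain ⟨t, ht⟩ := t
    have hes : e.symm ⟨s, hs⟩ = if h : k' < s then Sum.inr ⟨s, h⟩ else Sum.inl () := rfl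
    have het : e.symm ⟨t, ht⟩ = if h : k' < t then Sum.inr ⟨t, h⟩ else Sum.inl () := rfl
    rw [hes, het]
    rw [Fin.lt_def] at hs ht
    by_cases h1 : k' < s <;> by_cases h2 : k' < t
    · simp [h1, h2, hM0, trailing]
    · have ht' : t = k' := by apply Fin.ext; rw [Fin.lt_def] at h2; omega
      subst ht'
      simp [h1, h2, hM0, hc0, trailing]
    · have hs' : s = k' := by apply Fin.ext; rw [Fin.lt_def] at h1; omega
      subst hs'
      simp [h1, h2, hM0, hb0, trailing]
    · have ht' : t = k' := by apply Fin.ext; rw [Fin.lt_def] at h2; omega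
      have hs' : s = k' := by apply Fin.ext; rw [Fin.lt_def] at h1; omega
      subst ht'; subst hs'
      simp [h1, hM0, ha0, trailing]
  have hN : Ring.inverse (trailing A k) = (Ring.inverse M0).submatrix ⇑e.symm ⇑e.symm := by
    rw [hM, ringInverse_reindex, Matrix.reindex_apply]
  set U : Matrix Unit {x : Fin n // k < x} R := Matrix.of fun _ c => A i ↑c with hU
  set W : Matrix {x : Fin n // k < x} Unit R := Matrix.of fun r _ => A ↑r j with hW
  set u0 : Matrix Unit Unit R := Matrix.of fun _ _ => A i k' with hu0
  set u1 : Matrix Unit {x : Fin n // k' < x} R := Matrix.of fun _ s => A i ↑s with hu1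
  set w0 : Matrix Unit Unit R := Matrix.of fun _ _ => A k' j with hw0
  set w1 : Matrix {x : Fin n // k' < x} Unit R := Matrix.of fun r _ => A ↑r j with hw1
  have hUeq : U = (Matrix.fromCols u0 u1).submatrix id ⇑e.symm := by
    ext z s
    obtain ⟨s, hs⟩ := s
    rw [Matrix.submatrix_apply]
    have hes : e.symm ⟨s, hs⟩ = if h : k' < s then Sum.inr ⟨s, h⟩ else Sum.inl () := rfl
    rw [hes]
    by_cases h1 : k' < s
    · simp [h1, Matrix.fromCols, hu1, hU]
    · have hs' : s = k' := by
        apply Fin.ext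
        rw [Fin.lt_def] at hs h1
        omega
      subst hs'
      simp [h1, Matrix.fromCols, hu0, hU]
  have hWeq : W = (Matrix.fromRows w0 w1).submatrix ⇑e.symm id := by
    ext s z
    obtain ⟨s, hs⟩ := s
    rw [Matrix.submatrix_apply]
    have hes : e.symm ⟨s, hs⟩ = if h : k' < s then Sum.inr ⟨s, h⟩ else Sum.inl () := rfl
    rw [hes]
    by_cases h1 : k' < s
    · simp [h1, Matrix.fromRows_apply_inr, hw1, hW]
    · have hs' : s = k' := by
        apply Fin.ext
        rw [Fin.lt_def] at hs h1
        omega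
      subst hs'
      simp [h1, Matrix.fromRows_apply_inl, hw0, hW]
  have hprod : U * Ring.inverse (trailing A k) * W =
      u1 * iD * w1 + (u0 - u1 * iD * c0) * Ring.inverse (a0 - b0 * iD * c0) *
        (w0 - b0 * iD * w1) := by
    rw [hUeq, hN, hWeq, Matrix.submatrix_mul_equiv, Matrix.submatrix_mul_equiv,
      Matrix.submatrix_id_id]
    exact block_quasi u0 u1 w0 w1 a0 b0 c0 (trailing A k') (htr k') hS
  have key : ∑ c : {x : Fin n // k < x}, ∑ r : {x : Fin n // k < x},
      A i ↑c * Ring.inverse (trailing A k) c r * A ↑r j =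
        (U * Ring.inverse (trailing A k) * W) () () :=
    sum_eq_matrix (fun c : {x : Fin n // k < x} => A i ↑c) _
      (fun r : {x : Fin n // k < x} => A ↑r j)
  have e1 : (u1 * iD * w1) () () = ∑ c : {x : Fin n // k' < x}, ∑ r : {x : Fin n // k' < x},
      A i ↑c * iD c r * A ↑r j :=
    (sum_eq_matrix (fun c : {x : Fin n // k' < x} => A i ↑c) iD
      (fun r : {x : Fin n // k' < x} => A ↑r j)).symm
  have e2 : (u0 - u1 * iD * c0) () () = gg A k' i k' := by
    rw [Matrix.sub_apply,
      ← sum_eq_matrix (fun c : {x : Fin n // k' < x} => A i ↑c) iD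
        (fun r : {x : Fin n // k' < x} => A ↑r k')]
    rfl
  have e3 : (w0 - b0 * iD * w1) () () = gg A k' k' j := by
    rw [Matrix.sub_apply,
      ← sum_eq_matrix (fun c : {x : Fin n // k' < x} => A k' ↑c) iD
        (fun r : {x : Fin n // k' < x} => A ↑r j)]
    rfl
  have e4 : Ring.inverse (a0 - b0 * iD * c0) () () = Ring.inverse (gaussH A k') := by
    rw [entry_ringInverse, hSch]
  rw [gg, key, hprod, Matrix.add_apply, unit_mul_apply, unit_mul_apply, e1, e2, e3, e4]
  rw [sub_add_eq_sub_sub]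
  rfl

lemma gg_last (A : Matrix (Fin n) (Fin n) R) (m : Fin n) (hm : (m : ℕ) + 1 = n) (i j : Fin n) :
    gg A m i j = A i j := by
  have hE : IsEmpty {x : Fin n // m < x} :=
    ⟨fun x => absurd x.2 (by rw [Fin.lt_def]; have := x.1.isLt; omega)⟩
  rw [gg, Finset.univ_eq_empty, Finset.sum_empty, sub_zero]

lemma key_tele (A : Matrix (Fin n) (Fin n) R) (htr : ∀ k, IsUnit (trailing A k))
    (hH : ∀ k, IsUnit (gaussH A k)) :
    ∀ (d : ℕ) (m i j : Fin n), n - (m : ℕ) ≤ d → i ≤ m → j ≤ m →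
      A i j = gg A m i j +
        ∑ k ∈ Finset.Ioi m, gg A k i k * Ring.inverse (gaussH A k) * gg A k k j := by
  intro d
  induction d with
  | zero => intro m i j hd _ _; have := m.isLt; omega
  | succ d ih =>
    intro m i j hd hi hj
    by_cases hm : (m : ℕ) + 1 = n
    · have hIoi : Finset.Ioi m = (∅ : Finset (Fin n)) := by
        ext x
        simp only [Finset.mem_Ioi, Finset.notMem_empty, iff_false]
        rw [Fin.lt_def]
        have := x.isLt
        omega
      rw [gg_last A m hm, hIoi, Finset.sum_empty, add_zero]
    · have hm1 : (m : ℕ) + 1 < n := by have := m.isLt; omega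
      set m' : Fin n := ⟨(m : ℕ) + 1, hm1⟩ with hm'def
      have hval0 : (m' : ℕ) = (m : ℕ) + 1 := rfl
      have hmm' : m < m' := by rw [Fin.lt_def]; omega
      have h1 := ih m' i j (by omega) (le_trans hi hmm'.le) (le_trans hj hmm'.le)
      have h2 := gg_rec A htr m m' rfl (hH m') i j
      have hval : (m' : ℕ) = (m : ℕ) + 1 := rfl
      have hins : Finset.Ioi m = insert m' (Finset.Ioi m') := by
        ext x
        simp only [Finset.mem_Ioi, Finset.mem_insert, Fin.lt_def, Fin.ext_iff]
        omega
      rw [hins, Finset.sum_insert (by simp), h2, h1]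
      abel

end Aux2

/-- Gauss decomposition via quasi-determinants.  If the
quasi-determinants `ℍ_k = |A^{k,…,N}_{k,…,N}|_{kk}` exist (the trailing
submatrices being invertible) and are invertible, then `A = E · H · F` with
`H = diag(ℍ₁,…,ℍ_N)`, `E` upper unitriangular with
`E_{ij} = |A^{i,j+1,…,N}_{j,j+1,…,N}|_{ij} ℍ_j⁻¹`, and `F` lower
unitriangular with `F_{ji} = ℍ_j⁻¹ |A^{j,j+1,…,N}_{i,j+1,…,N}|_{ji}`. -/
theorem stmt14 (A : Matrix (Fin n) (Fin n) R)
    (htr : ∀ k : Fin n, IsUnit (trailing A k))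
    (hH : ∀ k : Fin n, IsUnit (gaussH A k)) :
    A =
      (Matrix.of fun i j : Fin n =>
          if i = j then (1 : R) else if i < j then gaussE A i j else 0) *
        Matrix.diagonal (fun k => gaussH A k) *
        (Matrix.of fun j i : Fin n =>
          if j = i then (1 : R) else if i < j then gaussF A j i else 0) := by
  ext i j
  rw [Matrix.mul_apply]
  simp only [Matrix.mul_diagonal, Matrix.of_apply]
  set m : Fin n := max i j with hm
  have him : i ≤ m := le_max_left i j
  have hjm : j ≤ m := le_max_right i j
  have hvan : ∀ x ∈ Finset.univ, x ∉ Finset.Ici m →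
      (if i = x then (1 : R) else if i < x then gaussE A i x else 0) * gaussH A x *
        (if x = j then (1 : R) else if j < x then gaussF A x j else 0) = 0 := by
    intro x _ hx
    rw [Finset.mem_Ici, not_le, hm, lt_max_iff] at hx
    rcases hx with hx | hx
    · rw [if_neg (ne_of_gt hx), if_neg (asymm hx), zero_mul, zero_mul]
    · rw [if_neg (ne_of_lt hx), if_neg (asymm hx), mul_zero]
  have hsum : ∑ x : Fin n,
      (if i = x then (1 : R) else if i < x then gaussE A i x else 0) * gaussH A x *
        (if x = j then (1 : R) else if j < x then gaussF A x j else 0) =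
      gg A m i j + ∑ k ∈ Finset.Ioi m, gg A k i k * Ring.inverse (gaussH A k) * gg A k k j := by
    rw [← Finset.sum_subset (Finset.subset_univ (Finset.Ici m)) hvan, ← Finset.Ioi_insert m,
      Finset.sum_insert (by simp)]
    congr 1
    · -- the `k = m` term
      rcases eq_or_lt_of_le hjm with hj | hj
      · rcases eq_or_lt_of_le him with hi | hi
        · rw [hi, hj]
          simp
          exact gaussH_eq_gg A m
        · rw [hj, if_neg (ne_of_lt hi), if_pos hi, if_pos rfl, mul_one]
          show gaussE A i m * gaussH A m = gg A m i m
          show gg A m i m * Ring.inverse (gaussH A m) * gaussH A m = gg A m i m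
          rw [mul_assoc, Ring.inverse_mul_cancel _ (hH m), mul_one]
      · have hi : i = m := by
          rcases eq_or_lt_of_le him with h | h
          · exact h
          · exact absurd (hm ▸ max_lt h hj) (lt_irrefl m)
        rw [hi, if_pos rfl, if_neg (ne_of_gt hj), if_pos hj, one_mul]
        show gaussH A m * gaussF A m j = gg A m m j
        show gaussH A m * (Ring.inverse (gaussH A m) * gg A m m j) = gg A m m j
        rw [← mul_assoc, Ring.mul_inverse_cancel _ (hH m), one_mul]
    · refine Finset.sum_congr rfl fun k hk => ?_
      rw [Finset.mem_Ioi] at hk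
      have hik : i < k := lt_of_le_of_lt him hk
      have hjk : j < k := lt_of_le_of_lt hjm hk
      rw [if_neg (ne_of_lt hik), if_pos hik, if_neg (ne_of_gt hjk), if_pos hjk]
      show gaussE A i k * gaussH A k * gaussF A k j = _
      show gg A k i k * Ring.inverse (gaussH A k) * gaussH A k *
        (Ring.inverse (gaussH A k) * gg A k k j) = _
      rw [mul_assoc (gg A k i k) (Ring.inverse (gaussH A k)) (gaussH A k),
        Ring.inverse_mul_cancel _ (hH k), mul_one,
        mul_assoc (gg A k i k) (Ring.inverse (gaussH A k)) (gg A k k j)]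
  rw [hsum]
  exact key_tele A htr hH n m i j (by omega) him hjm
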